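/- Let M₀ be a commutative unital C*-algebra and let Q = [[q₁, q],[q*, q₂]] be a projection in M₂(M₀) such that q₁ + q₂ ≤ 1. Then q₀ := q₁ + q₂ is a projection in M₀ and Q·(q₀ ⊗ I₂) = Q. -/

import Mathlib

/-- if `Q = [[q₁, q],[q*, q₂]]` is a projection in `M₂(M₀)` over a commutative
unital C*-algebra `M₀` with `q₁ + q₂ ≤ 1`, then `q₀ := q₁ + q₂` is a projection in `M₀` and
`Q (q₀ ⊗ I₂) = Q`. -/
theorem statement10 {M₀ : Type*} [CommCStarAlgebra M₀] [PartialOrder M₀] [StarOrderedRing M₀]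
    {q₁ q q₂ : M₀}
    (hstar : star (!![q₁, q; star q, q₂]) = !![q₁, q; star q, q₂])
    (hidem : !![q₁, q; star q, q₂] * !![q₁, q; star q, q₂] = !![q₁, q; star q, q₂])
    (hle : q₁ + q₂ ≤ 1) :
    (star (q₁ + q₂) = q₁ + q₂ ∧ (q₁ + q₂) * (q₁ + q₂) = q₁ + q₂) ∧
      !![q₁, q; star q, q₂] * !![q₁ + q₂, 0; 0, q₁ + q₂] = !![q₁, q; star q, q₂] := by
  rw [Matrix.mul_fin_two, ← Matrix.ext_iff] at hidem
  simp only [Fin.forall_fin_two, Matrix.cons_val_zero, Matrix.cons_val_one, Matrix.head_cons,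
    Matrix.head_fin_const, Matrix.cons_val', Matrix.empty_val', Matrix.cons_val_fin_one,
    Matrix.of_apply] at hidem
  obtain ⟨⟨e1, e2⟩, e3, e4⟩ := hidem
  rw [Matrix.star_eq_conjTranspose, Matrix.eta_fin_two (Matrix.conjTranspose !![q₁, q; star q, q₂]),
    ← Matrix.ext_iff] at hstar
  simp only [Matrix.conjTranspose_apply, Fin.forall_fin_two, Matrix.cons_val_zero,
    Matrix.cons_val_one, Matrix.head_cons, Matrix.head_fin_const, Matrix.cons_val',
    Matrix.empty_val', Matrix.cons_val_fin_one, Matrix.of_apply] at hstar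
  obtain ⟨⟨s1, -⟩, -, s2⟩ := hstar
  set d : M₀ := q₁ * q₂ - q * star q with hd
  -- ring consequences of the entry equations
  have h5 : q * (q₁ + q₂ - 1) = 0 := by linear_combination e2
  have h6 : star q * (q₁ + q₂ - 1) = 0 := by linear_combination e3
  have h7 : q₁ * (q₁ + q₂ - 1) = d := by rw [hd]; linear_combination e1
  have h8 : q₂ * (q₁ + q₂ - 1) = d := by rw [hd]; linear_combination e4
  have h5c : q * star q * (q₁ + q₂ - 1) = 0 := by linear_combination star q * h5
  have F5 : q₁ * q₁ * (q₁ + q₂ - 1) = q₁ * (q₁ + q₂ - 1) := by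
    linear_combination (q₁ + q₂ - 1) * e1 - h5c
  have F7 : q₁ * d = q₂ * d := by linear_combination q₂ * h7 - q₁ * h8
  have hts : (q₁ + q₂) * (q₁ + q₂ - 1) = 2 * d := by linear_combination h7 + h8
  have hds : d * (q₁ + q₂ - 1) = 2 * (q₁ * d) - d := by
    linear_combination q₁ * hts - (q₁ + q₂ - 1) * h7 - h7
  have hq12d : q₁ * q₁ * d = q₁ * d := by
    linear_combination (-(q₁ * q₁)) * h8 + q₂ * (F5.trans h7) - F7
  have hd2 : d * d = q₁ * d := by
    linear_combination q₁ * hds - d * h7 + 2 * hq12d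
  -- self-adjointness of d
  have sd : star d = d := by
    rw [hd, star_sub, StarMul.star_mul, StarMul.star_mul, star_star, s1, s2,
      mul_comm q₂ q₁]
  -- positivity facts
  have hq1nn : (0 : M₀) ≤ q₁ := by
    have h := add_nonneg (star_mul_self_nonneg q₁) (star_mul_self_nonneg (star q))
    rwa [s1, star_star, e1] at h
  have hq2nn : (0 : M₀) ≤ q₂ := by
    have h := add_nonneg (star_mul_self_nonneg q) (star_mul_self_nonneg q₂)
    rwa [s2, e4] at h
  have key : ∀ a b : M₀, 0 ≤ a → 0 ≤ b → 0 ≤ a * b := by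
    intro a b ha hb
    have h := conjugate_nonneg_of_nonneg ha (CFC.sqrt_nonneg (a := b))
    rwa [mul_comm (CFC.sqrt b) a, mul_assoc, CFC.sqrt_mul_sqrt_self b hb] at h
  -- q₁ * d is nonpositive, hence d * d = 0, hence d = 0
  have h2 : (0:M₀) ≤ (q₁ + q₂) * (1 - (q₁ + q₂)) :=
    key _ _ (add_nonneg hq1nn hq2nn) (sub_nonneg.2 hle)
  have h3 : (0:M₀) ≤ q₁ * ((q₁ + q₂) * (1 - (q₁ + q₂))) := key _ _ hq1nn h2
  have h4 : q₁ * ((q₁ + q₂) * (1 - (q₁ + q₂))) = -(2 * (q₁ * d)) := by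
    linear_combination (-q₁) * hts
  have hdd_le : 2 * (d * d) ≤ 0 := by
    rw [two_mul, hd2, ← neg_nonneg]
    calc (0:M₀) ≤ -(2 * (q₁ * d)) := h4 ▸ h3
    _ = -(q₁ * d + q₁ * d) := by ring_nf
  have hddnn : (0:M₀) ≤ d * d := by
    have := star_mul_self_nonneg d
    rwa [sd] at this
  have hdd0 : d * d = 0 := by
    have h9 : d * d ≤ 2 * (d * d) := by
      calc d * d = 0 + d * d := (zero_add _).symm
      _ ≤ d * d + d * d := add_le_add_left hddnn _
      _ = 2 * (d * d) := by ring
    exact le_antisymm (h9.trans hdd_le) hddnn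
  have hd0 : d = 0 := by
    rw [← CStarRing.star_mul_self_eq_zero_iff d, sd, hdd0]
  refine ⟨⟨by rw [star_add, s1, s2], by linear_combination hts + 2 * hd0⟩, ?_⟩
  rw [Matrix.mul_fin_two, ← Matrix.ext_iff]
  simp only [Fin.forall_fin_two, Matrix.cons_val_zero, Matrix.cons_val_one, Matrix.head_cons,
    Matrix.head_fin_const, Matrix.cons_val', Matrix.empty_val', Matrix.cons_val_fin_one,
    Matrix.of_apply]
  refine ⟨⟨?_, ?_⟩, ?_, ?_⟩
  · linear_combination h7 + hd0
  · linear_combination h5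
  · linear_combination h6
  · linear_combination h8 + hd0
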